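/- Let π₀, π₁ : Fin k → ℝ be probability vectors (nonnegative, summing to 1), let β ∈ (0,1), and let π = fun i => (1-β) * π₀ i + β * π₁ i. Let H(q) = ∑ i, negMulLog (q i) denote Shannon entropy. Then H(π) - (1-β) * H(π₀) - β * H(π₁) ≥ β * (1-β) * (∑ i, |π₀ i - π₁ i|)^2 / 2. -/

import Mathlib

open Real Finset

private noncomputable def phiAux (x : ℝ) : ℝ := Real.log x - 3*(x-1)*(x+5)/(2*(x+2)^2)

private noncomputable def gAux (x : ℝ) : ℝ := x * Real.log x - x + 1 - 3*(x-1)^2/(2*(x+2))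

private lemma hasDerivAt_phiAux {x : ℝ} (hx : 0 < x) :
    HasDerivAt phiAux ((x-1)^2*(x+8)/(x*(x+2)^3)) x := by
  have hx2 : (0:ℝ) < x + 2 := by linarith
  have hden : 2*(x+2)^2 ≠ 0 := by positivity
  have hlog : HasDerivAt Real.log x⁻¹ x := Real.hasDerivAt_log hx.ne'
  have hnum : HasDerivAt (fun x : ℝ => 3*(x-1)*(x+5)) (3*(x+5) + 3*(x-1)) x := by
    have h1 : HasDerivAt (fun x : ℝ => 3*(x-1)) 3 x := by
      simpa using (((hasDerivAt_id x).sub_const 1).const_mul 3)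
    have h2 : HasDerivAt (fun x : ℝ => x+5) 1 x := (hasDerivAt_id x).add_const 5
    simpa [mul_comm, mul_one] using h1.fun_mul h2
  have hden' : HasDerivAt (fun x : ℝ => 2*(x+2)^2) (2*(2*(x+2))) x := by
    have : HasDerivAt (fun x : ℝ => (x+2)^2) (2*(x+2)) x := by
      simpa using ((hasDerivAt_id x).add_const 2).fun_pow 2
    simpa using this.const_mul 2
  have hdiv := hnum.div hden' hden
  have := hlog.sub hdiv
  refine this.congr_deriv ?_
  field_simp
  ring

private lemma hasDerivAt_gAux {x : ℝ} (hx : 0 < x) :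
    HasDerivAt gAux (phiAux x) x := by
  have hx2 : (0:ℝ) < x + 2 := by linarith
  have hden : 2*(x+2) ≠ 0 := by positivity
  have h1 : HasDerivAt (fun x : ℝ => x * Real.log x) (Real.log x + 1) x :=
    Real.hasDerivAt_mul_log hx.ne'
  have hnum : HasDerivAt (fun x : ℝ => 3*(x-1)^2) (3*(2*(x-1))) x := by
    have : HasDerivAt (fun x : ℝ => (x-1)^2) (2*(x-1)) x := by
      simpa using ((hasDerivAt_id x).sub_const 1).fun_pow 2
    simpa using this.const_mul 3
  have hden' : HasDerivAt (fun x : ℝ => 2*(x+2)) 2 x := by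
    simpa using ((hasDerivAt_id x).add_const 2).const_mul 2
  have hdiv := hnum.div hden' hden
  have := ((h1.sub (hasDerivAt_id x)).add_const 1).sub hdiv
  refine this.congr_deriv ?_
  unfold phiAux
  field_simp
  ring

private lemma phiAux_one : phiAux 1 = 0 := by
  unfold phiAux
  norm_num

private lemma gAux_one : gAux 1 = 0 := by
  unfold gAux
  norm_num

private lemma phiAux_mono : MonotoneOn phiAux (Set.Ioi (0:ℝ)) := by
  have hint : interior (Set.Ioi (0:ℝ)) = Set.Ioi 0 := interior_Ioi
  refine monotoneOn_of_deriv_nonneg (convex_Ioi 0) ?_ ?_ ?_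
  · intro x hx
    exact (hasDerivAt_phiAux hx).continuousAt.continuousWithinAt
  · rw [hint]; intro x hx
    exact (hasDerivAt_phiAux hx).differentiableAt.differentiableWithinAt
  · rw [hint]; intro x hx
    rw [(hasDerivAt_phiAux hx).deriv]
    have hx' : (0:ℝ) < x := hx
    positivity

private lemma gAux_nonneg {x : ℝ} (hx : 0 ≤ x) : 0 ≤ gAux x := by
  rcases eq_or_lt_of_le hx with h | hx
  · unfold gAux
    rw [← h]
    norm_num
  rcases le_or_gt 1 x with h1 | h1
  · -- monotone on Ici 1
    have hmono : MonotoneOn gAux (Set.Ici (1:ℝ)) := by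
      refine monotoneOn_of_deriv_nonneg (convex_Ici 1) ?_ ?_ ?_
      · intro y hy
        exact (hasDerivAt_gAux (lt_of_lt_of_le one_pos hy)).continuousAt.continuousWithinAt
      · rw [interior_Ici]; intro y hy
        exact (hasDerivAt_gAux (lt_trans one_pos hy)).differentiableAt.differentiableWithinAt
      · rw [interior_Ici]; intro y hy
        rw [(hasDerivAt_gAux (lt_trans one_pos hy)).deriv]
        have := phiAux_mono (Set.mem_Ioi.2 one_pos) (Set.mem_Ioi.2 (lt_trans one_pos hy))
          (le_of_lt hy)
        rw [phiAux_one] at this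
        exact this
    have := hmono (Set.mem_Ici.2 le_rfl) h1 h1
    rwa [gAux_one] at this
  · -- antitone on Ioc 0 1
    have hanti : AntitoneOn gAux (Set.Ioc (0:ℝ) 1) := by
      refine antitoneOn_of_deriv_nonpos (convex_Ioc 0 1) ?_ ?_ ?_
      · intro y hy
        exact (hasDerivAt_gAux hy.1).continuousAt.continuousWithinAt
      · rw [interior_Ioc]; intro y hy
        exact (hasDerivAt_gAux hy.1).differentiableAt.differentiableWithinAt
      · rw [interior_Ioc]; intro y hy
        rw [(hasDerivAt_gAux hy.1).deriv]
        have := phiAux_mono (Set.mem_Ioi.2 hy.1) (Set.mem_Ioi.2 one_pos) (le_of_lt hy.2)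
        rw [phiAux_one] at this
        exact this
    have := hanti (Set.mem_Ioc.2 ⟨hx, h1.le⟩) (Set.mem_Ioc.2 ⟨one_pos, le_refl 1⟩) h1.le
    rwa [gAux_one] at this

/-- Scalar inequality: `x log x - x + 1 ≥ 3(x-1)²/(2(x+2))` for `x ≥ 0`. -/
private lemma scalar_ineq {x : ℝ} (hx : 0 ≤ x) :
    3*(x-1)^2/(2*(x+2)) ≤ x * Real.log x - x + 1 := by
  have := gAux_nonneg hx
  unfold gAux at this
  linarith

/-- Pointwise KL bound. -/
private lemma kl_pointwise {p q : ℝ} (hp : 0 ≤ p) (hq : 0 < q) :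
    3*(p-q)^2/(2*(p+2*q)) ≤ p * Real.log (p/q) - p + q := by
  have hq' : q ≠ 0 := hq.ne'
  have hx : 0 ≤ p / q := div_nonneg hp hq.le
  have h := scalar_ineq hx
  have h2 := mul_le_mul_of_nonneg_left h hq.le
  have hd1 : p/q + 2 > 0 := by positivity
  have hd2 : p + 2*q > 0 := by linarith
  have e1 : q * (p/q * Real.log (p/q) - p/q + 1) = p * Real.log (p/q) - p + q := by
    field_simp
  have e2 : q * (3*(p/q-1)^2/(2*(p/q+2))) = 3*(p-q)^2/(2*(p+2*q)) := by
    field_simp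
  rw [e1, e2] at h2
  exact h2

/-- Pinsker-type inequality for finite probability vectors. -/
private lemma pinsker {k : ℕ} (p q : Fin k → ℝ)
    (hp : ∀ i, 0 ≤ p i) (hq : ∀ i, 0 ≤ q i)
    (hps : ∑ i, p i = 1) (hqs : ∑ i, q i = 1)
    (habs : ∀ i, q i = 0 → p i = 0) :
    (∑ i, |p i - q i|)^2 / 2 ≤ ∑ i, p i * Real.log (p i / q i) := by
  set w : Fin k → ℝ := fun i => (p i + 2 * q i)/3 with hw
  have hwnn : ∀ i, 0 ≤ w i := fun i => by have := hp i; have := hq i; positivity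
  have hwsum : ∑ i, w i = 1 := by
    simp only [hw]
    rw [← Finset.sum_div, Finset.sum_add_distrib, ← Finset.mul_sum, hps, hqs]
    norm_num
  -- Cauchy-Schwarz
  have hcs := Finset.sum_mul_sq_le_sq_mul_sq Finset.univ
    (fun i => |p i - q i| / Real.sqrt (w i)) (fun i => Real.sqrt (w i))
  have hfg : ∀ i : Fin k, |p i - q i| / Real.sqrt (w i) * Real.sqrt (w i) = |p i - q i| := by
    intro i
    rcases eq_or_lt_of_le (hwnn i) with h0 | h0
    · have hsum0 : p i + 2 * q i = 0 := by
        have h4 := h0.symm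
        simp only [hw] at h4
        linarith
      have hq0 : q i = 0 := by have := hp i; have := hq i; linarith
      have hp0 : p i = 0 := habs i hq0
      simp [hp0, hq0]
    · rw [div_mul_cancel₀ _ (Real.sqrt_ne_zero'.2 h0)]
  have hsq : ∀ i : Fin k, (|p i - q i| / Real.sqrt (w i))^2 = (p i - q i)^2 / w i := by
    intro i
    rw [div_pow, sq_abs, Real.sq_sqrt (hwnn i)]
  have hg2 : ∀ i : Fin k, (Real.sqrt (w i))^2 = w i := fun i => Real.sq_sqrt (hwnn i)
  simp only [hfg, hsq, hg2] at hcs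
  rw [hwsum, mul_one] at hcs
  -- pointwise bound on the middle sum
  have hmid : ∑ i, (p i - q i)^2 / w i ≤ ∑ i, 2 * (p i * Real.log (p i / q i) - p i + q i) := by
    apply Finset.sum_le_sum
    intro i _
    rcases eq_or_lt_of_le (hq i) with hq0 | hq0
    · have hp0 : p i = 0 := habs i hq0.symm
      simp [hp0, ← hq0]
    · have hkl := kl_pointwise (hp i) hq0
      have hd : 0 < p i + 2 * q i := by have := hp i; linarith
      have hweq : (p i - q i)^2 / w i = 2 * (3*(p i - q i)^2/(2*(p i + 2 * q i))) := by
        simp only [hw]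
        field_simp
      rw [hweq]
      linarith
  have hsum2 : ∑ i, 2 * (p i * Real.log (p i / q i) - p i + q i)
      = 2 * ∑ i, p i * Real.log (p i / q i) := by
    rw [← Finset.mul_sum]
    congr 1
    rw [Finset.sum_add_distrib, Finset.sum_sub_distrib, hps, hqs]
    ring
  rw [hsum2] at hmid
  nlinarith [hcs, hmid, sq_nonneg (∑ i, |p i - q i|)]

theorem entropy_strong_concavity_gap (k : ℕ)
    (π₀ π₁ : Fin k → ℝ)
    (h₀ : ∀ i, 0 ≤ π₀ i) (h₀sum : ∑ i, π₀ i = 1)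
    (h₁ : ∀ i, 0 ≤ π₁ i) (h₁sum : ∑ i, π₁ i = 1)
    (β : ℝ) (hβ0 : 0 < β) (hβ1 : β < 1) :
    β * (1 - β) * (∑ i, |π₀ i - π₁ i|) ^ 2 / 2 ≤
      (∑ i, Real.negMulLog ((1 - β) * π₀ i + β * π₁ i))
        - (1 - β) * (∑ i, Real.negMulLog (π₀ i))
        - β * (∑ i, Real.negMulLog (π₁ i)) := by
  set m : Fin k → ℝ := fun i => (1 - β) * π₀ i + β * π₁ i with hm
  have hβ1' : 0 < 1 - β := by linarith
  have hmnn : ∀ i, 0 ≤ m i := fun i => by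
    have := h₀ i; have := h₁ i
    simp only [hm]; positivity
  have hmsum : ∑ i, m i = 1 := by
    simp only [hm]
    rw [Finset.sum_add_distrib, ← Finset.mul_sum, ← Finset.mul_sum, h₀sum, h₁sum]
    ring
  have hm0 : ∀ i, m i = 0 → π₀ i = 0 ∧ π₁ i = 0 := by
    intro i h
    simp only [hm] at h
    constructor
    · nlinarith [h₀ i, h₁ i]
    · nlinarith [h₀ i, h₁ i]
  -- pointwise decomposition
  have hptwise : ∀ i, Real.negMulLog (m i) - (1 - β) * Real.negMulLog (π₀ i)
      - β * Real.negMulLog (π₁ i)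
      = (1 - β) * (π₀ i * Real.log (π₀ i / m i)) + β * (π₁ i * Real.log (π₁ i / m i)) := by
    intro i
    rcases eq_or_lt_of_le (hmnn i) with hmi | hmi
    · obtain ⟨e0, e1⟩ := hm0 i hmi.symm
      simp [e0, e1, ← hmi, Real.negMulLog]
    · have e0 : π₀ i * Real.log (π₀ i / m i) = π₀ i * Real.log (π₀ i) - π₀ i * Real.log (m i) := by
        rcases eq_or_lt_of_le (h₀ i) with h | h
        · simp [← h]
        · rw [Real.log_div h.ne' hmi.ne']; ring
      have e1 : π₁ i * Real.log (π₁ i / m i) = π₁ i * Real.log (π₁ i) - π₁ i * Real.log (m i) := by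
        rcases eq_or_lt_of_le (h₁ i) with h | h
        · simp [← h]
        · rw [Real.log_div h.ne' hmi.ne']; ring
      have hmdef : m i = (1 - β) * π₀ i + β * π₁ i := rfl
      rw [e0, e1]
      simp only [Real.negMulLog, hmdef]
      ring
  have hdecomp : (∑ i, Real.negMulLog (m i))
        - (1 - β) * (∑ i, Real.negMulLog (π₀ i))
        - β * (∑ i, Real.negMulLog (π₁ i))
      = (1 - β) * (∑ i, π₀ i * Real.log (π₀ i / m i))
        + β * (∑ i, π₁ i * Real.log (π₁ i / m i)) := by
    rw [Finset.mul_sum, Finset.mul_sum, Finset.mul_sum, Finset.mul_sum,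
      ← Finset.sum_add_distrib, ← Finset.sum_sub_distrib, ← Finset.sum_sub_distrib]
    exact Finset.sum_congr rfl fun i _ => hptwise i
  have hKL0 := pinsker π₀ m h₀ hmnn h₀sum hmsum (fun i h => (hm0 i h).1)
  have hKL1 := pinsker π₁ m h₁ hmnn h₁sum hmsum (fun i h => (hm0 i h).2)
  set S : ℝ := ∑ i, |π₀ i - π₁ i| with hS
  have habs0 : ∑ i, |π₀ i - m i| = β * S := by
    rw [hS, Finset.mul_sum]
    apply Finset.sum_congr rfl
    intro i _
    have : π₀ i - m i = β * (π₀ i - π₁ i) := by simp only [hm]; ring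
    rw [this, abs_mul, abs_of_pos hβ0]
  have habs1 : ∑ i, |π₁ i - m i| = (1 - β) * S := by
    rw [hS, Finset.mul_sum]
    apply Finset.sum_congr rfl
    intro i _
    have : π₁ i - m i = (1 - β) * (π₁ i - π₀ i) := by simp only [hm]; ring
    rw [this, abs_mul, abs_of_pos hβ1', abs_sub_comm]
  rw [habs0] at hKL0
  rw [habs1] at hKL1
  rw [hdecomp]
  have hKL0' := mul_le_mul_of_nonneg_left hKL0 hβ1'.le
  have hKL1' := mul_le_mul_of_nonneg_left hKL1 hβ0.le
  nlinarith [hKL0', hKL1']
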